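/- Let c : K → ℝ be continuous on K = B × U × V with B, U, V compact and λ(x) = min_{(u,v) ∈ U×V} c(x,u,v). Then the minimum over all finite Borel measures μ on K whose B-marginal is Lebesgue measure on B of ∫_K c dμ equals ∫_B λ(x) dx. -/

import Mathlib

open MeasureTheory Metric Set Filter Topology
set_option linter.unusedSectionVars false

section Sel
variable {X E : Type*} [TopologicalSpace X] [MeasurableSpace X] [OpensMeasurableSpace X]
  [MetricSpace E] [MeasurableSpace E] [BorelSpace E] [SecondCountableTopology E]

/-- parametric min over a set -/
noncomputable def selG (c : X → E → ℝ) (C : Set E) (x : X) : ℝ := sInf ((c x) '' C)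

lemma selG_cont_aux {c : X → E → ℝ} (hc : Continuous fun z : X × E => c z.1 z.2) (x : X) :
    Continuous (c x) :=
  hc.comp (continuous_const.prodMk continuous_id)

lemma selG_attain {c : X → E → ℝ} (hc : Continuous fun z : X × E => c z.1 z.2)
    {C : Set E} (hCne : C.Nonempty) (hC : IsCompact C) (x : X) :
    ∃ y ∈ C, c x y = selG c C x ∧ ∀ y' ∈ C, c x y ≤ c x y' := by
  obtain ⟨y, hy, hmin⟩ := hC.exists_isMinOn hCne (selG_cont_aux hc x).continuousOn
  have hleast : IsLeast ((c x) '' C) (c x y) :=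
    ⟨⟨y, hy, rfl⟩, by rintro r ⟨y', hy', rfl⟩; exact hmin hy'⟩
  exact ⟨y, hy, hleast.csInf_eq.symm, fun y' hy' => hmin hy'⟩

lemma selG_le {c : X → E → ℝ} (hc : Continuous fun z : X × E => c z.1 z.2)
    {C : Set E} (hC : IsCompact C) (x : X) {y : E} (hy : y ∈ C) :
    selG c C x ≤ c x y :=
  csInf_le (hC.image_of_continuousOn (selG_cont_aux hc x).continuousOn).bddBelow ⟨y, hy, rfl⟩

lemma selG_meas {c : X → E → ℝ} (hc : Continuous fun z : X × E => c z.1 z.2)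
    {C : Set E} (hCne : C.Nonempty) (hC : IsCompact C) :
    Measurable (selG c C) := by
  apply measurable_of_Iio
  intro t
  have hset : selG c C ⁻¹' Iio t = ⋃ y ∈ C, {x | c x y < t} := by
    ext x
    simp only [mem_preimage, mem_Iio, mem_iUnion, mem_setOf_eq]
    constructor
    · intro h
      obtain ⟨r, hr, hrt⟩ := exists_lt_of_csInf_lt (hCne.image _) h
      obtain ⟨y, hy, rfl⟩ := hr
      exact ⟨y, hy, hrt⟩
    · rintro ⟨y, hy, hyt⟩
      exact lt_of_le_of_lt (selG_le hc hC x hy) hyt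
  rw [hset]
  refine (isOpen_iUnion fun y => isOpen_iUnion fun _ => ?_).measurableSet
  exact isOpen_lt (hc.comp (continuous_id.prodMk continuous_const)) continuous_const

end Sel

section Sel2
variable {X E : Type*} [TopologicalSpace X] [MeasurableSpace X] [OpensMeasurableSpace X]
  [MetricSpace E] [MeasurableSpace E] [BorelSpace E] [SecondCountableTopology E]

def selCond (c : X → E → ℝ) (lam : X → ℝ) (q : ℕ → E) (C : Set E) (k j : ℕ) (x : X) : Prop :=
  ∃ y ∈ C ∩ closedBall (q j) ((1/2:ℝ)^k), c x y ≤ lam x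

open Classical in
noncomputable def selS (W : Set E) (c : X → E → ℝ) (lam : X → ℝ) (q : ℕ → E) :
    ℕ → X → Set E
  | 0, _ => W
  | (k+1), x =>
      if h : ∃ j, selCond c lam q (selS W c lam q k x) k j x then
        selS W c lam q k x ∩ closedBall (q (Nat.find h)) ((1/2:ℝ)^k)
      else selS W c lam q k x

open Classical in
noncomputable def selJ (W : Set E) (c : X → E → ℝ) (lam : X → ℝ) (q : ℕ → E)
    (k : ℕ) (x : X) : ℕ :=
  if h : ∃ j, selCond c lam q (selS W c lam q k x) k j x then Nat.find h else 0

lemma selS_succ {W : Set E} {c : X → E → ℝ} {lam : X → ℝ} {q : ℕ → E} {k : ℕ} {x : X}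
    (h : ∃ j, selCond c lam q (selS W c lam q k x) k j x) :
    selS W c lam q (k+1) x =
      selS W c lam q k x ∩ closedBall (q (selJ W c lam q k x)) ((1/2:ℝ)^k) := by
  rw [selJ, dif_pos h]
  conv_lhs => rw [selS]
  rw [dif_pos h]

open Classical in
lemma selJ_eq {W : Set E} {c : X → E → ℝ} {lam : X → ℝ} {q : ℕ → E} {k : ℕ} {x : X}
    (h : ∃ j, selCond c lam q (selS W c lam q k x) k j x) :
    selJ W c lam q k x = Nat.find h := dif_pos h

end Sel2

section Sel3
variable {X E : Type*} [TopologicalSpace X] [MeasurableSpace X] [OpensMeasurableSpace X]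
  [MetricSpace E] [MeasurableSpace E] [BorelSpace E] [SecondCountableTopology E]

theorem exists_measurable_argmin (W : Set E) (hW : IsCompact W) (hWne : W.Nonempty)
    (c : X → E → ℝ) (hc : Continuous fun z : X × E => c z.1 z.2) :
    ∃ s : X → E, Measurable s ∧ ∀ x, s x ∈ W ∧ ∀ y ∈ W, c x (s x) ≤ c x y := by
  classical
  haveI : Nonempty E := ⟨hWne.choose⟩
  obtain ⟨q, hq⟩ := TopologicalSpace.exists_dense_seq E
  set lam : X → ℝ := selG c W with hlamdef
  set S : ℕ → X → Set E := selS W c lam q with hSdef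
  set J : ℕ → X → ℕ := selJ W c lam q with hJdef
  have hrpos : ∀ k : ℕ, (0:ℝ) < (1/2)^k := fun k => pow_pos (by norm_num) k
  have lamMeas : Measurable lam := selG_meas hc hWne hW
  -- invariant
  have inv : ∀ k x, IsCompact (S k x) ∧ S k x ⊆ W ∧ ∃ y ∈ S k x, c x y ≤ lam x := by
    intro k
    induction k with
    | zero =>
      intro x
      refine ⟨hW, subset_rfl, ?_⟩
      obtain ⟨y, hy, hyeq, -⟩ := selG_attain hc hWne hW x
      exact ⟨y, hy, le_of_eq hyeq⟩
    | succ k ih =>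
      intro x
      obtain ⟨hcomp, hsub, y, hyS, hyc⟩ := ih x
      have hex : ∃ j, selCond c lam q (S k x) k j x := by
        obtain ⟨j, hj⟩ := hq.exists_dist_lt y (hrpos k)
        exact ⟨j, y, ⟨hyS, mem_closedBall.2 hj.le⟩, hyc⟩
      have hstep : S (k+1) x = S k x ∩ closedBall (q (J k x)) ((1/2:ℝ)^k) := selS_succ hex
      have hfind := Nat.find_spec hex
      obtain ⟨y', hy', hy'c⟩ := hfind
      have hJx : J k x = Nat.find hex := selJ_eq hex
      rw [← hJx] at hy'
      refine ⟨?_, ?_, ⟨y', ?_, hy'c⟩⟩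
      · rw [hstep]; exact hcomp.inter_right isClosed_closedBall
      · rw [hstep]; exact inter_subset_left.trans hsub
      · rw [hstep]; exact hy'
  have hexall : ∀ k x, ∃ j, selCond c lam q (S k x) k j x := by
    intro k x
    obtain ⟨-, -, y, hyS, hyc⟩ := inv k x
    obtain ⟨j, hj⟩ := hq.exists_dist_lt y (hrpos k)
    exact ⟨j, y, ⟨hyS, mem_closedBall.2 hj.le⟩, hyc⟩
  have hstep : ∀ k x, S (k+1) x = S k x ∩ closedBall (q (J k x)) ((1/2:ℝ)^k) :=
    fun k x => selS_succ (hexall k x)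
  -- measurability of conditions
  have condMeas : ∀ (C : Set E), IsCompact C → ∀ k j,
      MeasurableSet {x | selCond c lam q C k j x} := by
    intro C hC k j
    have hC'c : IsCompact (C ∩ closedBall (q j) ((1/2:ℝ)^k)) :=
      hC.inter_right isClosed_closedBall
    rcases (C ∩ closedBall (q j) ((1/2:ℝ)^k)).eq_empty_or_nonempty with he | hne
    · have : {x | selCond c lam q C k j x} = ∅ := by
        ext x
        simp only [selCond, mem_setOf_eq, mem_empty_iff_false, iff_false, not_exists]
        intro y hy
        rw [he] at hy
        exact absurd hy.1 (notMem_empty y)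
      rw [this]; exact MeasurableSet.empty
    · have : {x | selCond c lam q C k j x} =
          {x | selG c (C ∩ closedBall (q j) ((1/2:ℝ)^k)) x ≤ lam x} := by
        ext x
        simp only [selCond, mem_setOf_eq]
        constructor
        · rintro ⟨y, hy, hyc⟩
          exact (selG_le hc hC'c x hy).trans hyc
        · intro h
          obtain ⟨y, hy, hyeq, -⟩ := selG_attain hc hne hC'c x
          exact ⟨y, hy, le_trans (le_of_eq hyeq) h⟩
      rw [this]
      exact measurableSet_le (selG_meas hc hne hC'c) lamMeas
  -- characterization of J on fibers
  have Jchar : ∀ (k : ℕ) (C : Set E) (j : ℕ) (x : X), S k x = C →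
      (J k x = j ↔ selCond c lam q C k j x ∧ ∀ i < j, ¬ selCond c lam q C k i x) := by
    intro k C j x hx
    subst hx
    rw [hJdef, selJ_eq (hexall k x)]
    exact Nat.find_eq_iff (hexall k x)
  -- measurability of {S = C} ∩ {J = j}
  have JSmeas : ∀ (k : ℕ) (C : Set E), IsCompact C → MeasurableSet {x | S k x = C} →
      ∀ j, MeasurableSet ({x | S k x = C} ∩ {x | J k x = j}) := by
    intro k C hC hCm j
    have hset : {x | S k x = C} ∩ {x | J k x = j} =
        {x | S k x = C} ∩ ({x | selCond c lam q C k j x} ∩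
          ⋂ (i : ℕ) (_ : i < j), {x | selCond c lam q C k i x}ᶜ) := by
      ext x
      simp only [mem_inter_iff, mem_setOf_eq, mem_iInter, mem_compl_iff]
      constructor
      · rintro ⟨hS, hJ⟩
        have := (Jchar k C j x hS).1 hJ
        exact ⟨hS, this.1, fun i hi => this.2 i hi⟩
      · rintro ⟨hS, h1, h2⟩
        exact ⟨hS, (Jchar k C j x hS).2 ⟨h1, h2⟩⟩
    rw [hset]
    exact hCm.inter ((condMeas C hC k j).inter
      (MeasurableSet.iInter fun i => MeasurableSet.iInter fun _ => (condMeas C hC k i).compl))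
  -- countable fiber structure
  have fiberStruct : ∀ k, ∃ D : Set (Set E), D.Countable ∧ (∀ C ∈ D, IsCompact C) ∧
      (∀ x, S k x ∈ D) ∧ ∀ C ∈ D, MeasurableSet {x | S k x = C} := by
    intro k
    induction k with
    | zero =>
      refine ⟨{W}, countable_singleton _, ?_, fun x => rfl, ?_⟩
      · rintro C rfl; exact hW
      · rintro C rfl
        have : {x | S 0 x = C} = univ := eq_univ_of_forall fun x => rfl
        rw [this]; exact MeasurableSet.univ
    | succ k ih =>
      obtain ⟨D, hDc, hDcomp, hDmem, hDfib⟩ := ih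
      refine ⟨(fun Cj : Set E × ℕ => Cj.1 ∩ closedBall (q Cj.2) ((1/2:ℝ)^k)) ''
          (D ×ˢ (univ : Set ℕ)), (hDc.prod countable_univ).image _, ?_, ?_, ?_⟩
      · rintro C' ⟨⟨C, j⟩, ⟨hCD, -⟩, rfl⟩
        exact (hDcomp C hCD).inter_right isClosed_closedBall
      · intro x
        exact ⟨(S k x, J k x), ⟨hDmem x, trivial⟩, (hstep k x).symm⟩
      · rintro C' -
        have hdecomp : {x | S (k+1) x = C'} = ⋃ C ∈ D, ⋃ (j : ℕ)
            (_ : C ∩ closedBall (q j) ((1/2:ℝ)^k) = C'),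
            ({x | S k x = C} ∩ {x | J k x = j}) := by
          ext x
          simp only [mem_setOf_eq, mem_iUnion, mem_inter_iff]
          constructor
          · intro hx
            exact ⟨S k x, hDmem x, J k x, by rw [← hstep k x]; exact hx, rfl, rfl⟩
          · rintro ⟨C, hCD, j, hCj, hS, hJ⟩
            rw [hstep k x, hS, hJ, hCj]
        rw [hdecomp]
        exact MeasurableSet.biUnion hDc fun C hCD => MeasurableSet.iUnion fun j =>
          MeasurableSet.iUnion fun _ => JSmeas k C (hDcomp C hCD) (hDfib C hCD) j
  have Jmeas : ∀ k, Measurable (J k) := by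
    intro k
    obtain ⟨D, hDc, hDcomp, hDmem, hDfib⟩ := fiberStruct k
    apply measurable_to_countable'
    intro j
    have : J k ⁻¹' {j} = ⋃ C ∈ D, ({x | S k x = C} ∩ {x | J k x = j}) := by
      ext x
      simp only [mem_preimage, mem_singleton_iff, mem_iUnion, mem_inter_iff, mem_setOf_eq]
      constructor
      · intro hx; exact ⟨S k x, hDmem x, rfl, hx⟩
      · rintro ⟨C, hCD, -, hJ⟩; exact hJ
    rw [this]
    exact MeasurableSet.biUnion hDc fun C hCD => JSmeas k C (hDcomp C hCD) (hDfib C hCD) j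
  -- the limit point
  have nested : ∀ k x, S (k+1) x ⊆ S k x := by
    intro k x; rw [hstep k x]; exact inter_subset_left
  have hSball : ∀ k x, S (k+1) x ⊆ closedBall (q (J k x)) ((1/2:ℝ)^k) := by
    intro k x; rw [hstep k x]; exact inter_subset_right
  have hzex : ∀ x, ∃ z, z ∈ ⋂ k, S k x := by
    intro x
    obtain ⟨z, hz⟩ := IsCompact.nonempty_iInter_of_sequence_nonempty_isCompact_isClosed
      (fun k => S k x) (fun k => nested k x)
      (fun k => (inv k x).2.2.imp fun y hy => hy.1)
      (inv 0 x).1 (fun k => (inv k x).1.isClosed)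
    exact ⟨z, hz⟩
  choose s hs using hzex
  have hsmem : ∀ x k, s x ∈ S k x := fun x k => mem_iInter.1 (hs x) k
  have hrtend : Tendsto (fun k : ℕ => ((1/2:ℝ))^k) atTop (𝓝 0) :=
    tendsto_pow_atTop_nhds_zero_of_lt_one (by norm_num) (by norm_num)
  have htend : ∀ x, Tendsto (fun k => q (J k x)) atTop (𝓝 (s x)) := by
    intro x
    rw [tendsto_iff_dist_tendsto_zero]
    refine squeeze_zero (fun k => dist_nonneg) (fun k => ?_) hrtend
    have := hSball k x (hsmem x (k+1))
    rw [mem_closedBall] at this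
    rw [dist_comm]
    exact this
  have smeas : Measurable s :=
    measurable_of_tendsto_metrizable (fun k => measurable_from_top.comp (Jmeas k))
      (tendsto_pi_nhds.2 htend)
  refine ⟨s, smeas, fun x => ?_⟩
  have hsW : s x ∈ W := hsmem x 0
  have key : c x (s x) ≤ lam x := by
    choose yk hykS hykc using fun k => (inv k x).2.2
    have hyt : Tendsto (fun k => yk (k+1)) atTop (𝓝 (s x)) := by
      rw [tendsto_iff_dist_tendsto_zero]
      refine squeeze_zero (fun k => dist_nonneg) (fun k => ?_)
        (by have h := hrtend.const_mul 2; rw [mul_zero] at h; exact h)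
      have h1 := hSball k x (hykS (k+1))
      have h2 := hSball k x (hsmem x (k+1))
      rw [mem_closedBall] at h1 h2
      calc dist (yk (k+1)) (s x)
          ≤ dist (yk (k+1)) (q (J k x)) + dist (q (J k x)) (s x) := dist_triangle _ _ _
        _ ≤ (1/2:ℝ)^k + (1/2:ℝ)^k := by
            rw [dist_comm (q (J k x))]
            exact add_le_add h1 h2
        _ = 2 * (1/2:ℝ)^k := by ring
    have hct : Tendsto (fun k => c x (yk (k+1))) atTop (𝓝 (c x (s x))) :=
      ((selG_cont_aux hc x).tendsto (s x)).comp hyt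
    exact le_of_tendsto hct (Eventually.of_forall fun k => hykc (k+1))
  exact ⟨hsW, fun y hy => key.trans (selG_le hc hW x hy)⟩

end Sel3

/-- The infinite-dimensional LP: the minimum of `∫_K c dμ` over all finite
Borel measures `μ` on `K = B × U × V` whose `B`-marginal is the Lebesgue
measure on `B` equals `∫_B lam(x) dx`, where
`lam(x) = min_{(u,v) ∈ U × V} c(x,u,v)`. -/
theorem lp_min_eq_integral_min
    {n p m : ℕ}
    (B : Set (Fin n → ℝ)) (U : Set (Fin p → ℝ)) (V : Set (Fin m → ℝ))
    (hB : IsCompact B) (hBvol : 0 < volume B)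
    (hU : IsCompact U) (hUne : U.Nonempty)
    (hV : IsCompact V) (hVne : V.Nonempty)
    (c : (Fin n → ℝ) × (Fin p → ℝ) × (Fin m → ℝ) → ℝ) (hc : Continuous c)
    (lam : (Fin n → ℝ) → ℝ)
    (hlam : ∀ x, lam x = sInf {r : ℝ | ∃ u ∈ U, ∃ v ∈ V, r = c (x, u, v)}) :
    IsLeast {r : ℝ |
        ∃ μ : Measure ((Fin n → ℝ) × (Fin p → ℝ) × (Fin m → ℝ)),
          IsFiniteMeasure μ ∧ μ (B ×ˢ (U ×ˢ V))ᶜ = 0 ∧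
          Measure.map Prod.fst μ = volume.restrict B ∧
          r = ∫ z, c z ∂μ}
      (∫ x in B, lam x) := by
  classical
  set W : Set ((Fin p → ℝ) × (Fin m → ℝ)) := U ×ˢ V with hWdef
  have hWcomp : IsCompact W := hU.prod hV
  have hWne : W.Nonempty := hUne.prod hVne
  set c2 : (Fin n → ℝ) → ((Fin p → ℝ) × (Fin m → ℝ)) → ℝ := fun x y => c (x, y) with hc2def
  have hc2 : Continuous fun z : (Fin n → ℝ) × ((Fin p → ℝ) × (Fin m → ℝ)) => c2 z.1 z.2 := hc
  obtain ⟨s, smeas, hsmin⟩ := exists_measurable_argmin W hWcomp hWne c2 hc2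
  -- lam is the parametric min
  have hsetimg : ∀ x : Fin n → ℝ, {r : ℝ | ∃ u ∈ U, ∃ v ∈ V, r = c (x, u, v)} = (c2 x) '' W := by
    intro x
    ext r
    constructor
    · rintro ⟨u, hu, v, hv, rfl⟩
      exact ⟨(u, v), ⟨hu, hv⟩, rfl⟩
    · rintro ⟨⟨u, v⟩, ⟨hu, hv⟩, rfl⟩
      exact ⟨u, hu, v, hv, rfl⟩
  have hlamG : lam = selG c2 W := by
    funext x
    rw [hlam x, hsetimg x]
    rfl
  have hlameq : ∀ x : Fin n → ℝ, lam x = c2 x (s x) := by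
    intro x
    rw [hlamG]
    have hleast : IsLeast ((c2 x) '' W) (c2 x (s x)) :=
      ⟨⟨s x, (hsmin x).1, rfl⟩, by rintro r ⟨y, hy, rfl⟩; exact (hsmin x).2 y hy⟩
    exact hleast.csInf_eq.symm.symm
  have lammeas : Measurable lam := by
    rw [hlamG]; exact selG_meas hc2 hWne hWcomp
  -- bound on c over K
  have hK : IsCompact (B ×ˢ W) := hB.prod hWcomp
  obtain ⟨M, hM⟩ := hK.exists_bound_of_continuousOn hc.continuousOn
  have hKmeas : MeasurableSet (B ×ˢ W) := (hB.isClosed.prod hWcomp.isClosed).measurableSet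
  constructor
  · -- membership: the graph measure
    set gr : (Fin n → ℝ) → (Fin n → ℝ) × ((Fin p → ℝ) × (Fin m → ℝ)) := fun x => (x, s x) with hgrdef
    have grmeas : Measurable gr := measurable_id.prodMk smeas
    haveI : IsFiniteMeasure (volume.restrict B : Measure (Fin n → ℝ)) :=
      ⟨by rw [Measure.restrict_apply_univ]; exact hB.measure_lt_top⟩
    refine ⟨Measure.map gr (volume.restrict B), ?_, ?_, ?_, ?_⟩
    · constructor
      rw [Measure.map_apply grmeas MeasurableSet.univ]
      exact (measure_mono (subset_univ _)).trans_lt (measure_lt_top _ _)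
    · rw [Measure.map_apply grmeas hKmeas.compl,
        Measure.restrict_apply (grmeas hKmeas.compl)]
      have : gr ⁻¹' (B ×ˢ W)ᶜ ∩ B = ∅ := by
        ext x
        simp only [mem_inter_iff, mem_preimage, mem_compl_iff, mem_empty_iff_false,
          iff_false, not_and]
        intro hxc hxB
        exact hxc ⟨hxB, (hsmin x).1⟩
      rw [this]
      exact measure_empty
    · rw [Measure.map_map measurable_fst grmeas]
      have : (Prod.fst ∘ gr) = id := rfl
      rw [this, Measure.map_id]
    · rw [integral_map grmeas.aemeasurable hc.aestronglyMeasurable]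
      have : (fun x => c (gr x)) = lam := funext fun x => (hlameq x).symm
      rw [this]
  · -- lower bound
    rintro r ⟨μ, hfin, hnull, hmap, rfl⟩
    haveI := hfin
    have hae : ∀ᵐ z ∂μ, z ∈ B ×ˢ W := by
      rw [ae_iff]
      exact hnull
    have hintc : Integrable c μ := by
      refine ⟨hc.aestronglyMeasurable, ?_⟩
      apply HasFiniteIntegral.of_bounded (C := M)
      filter_upwards [hae] with z hz
      exact hM z hz
    have hintlam : Integrable (fun z : (Fin n → ℝ) × ((Fin p → ℝ) × (Fin m → ℝ)) => lam z.1) μ := by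
      refine ⟨(lammeas.comp measurable_fst).aestronglyMeasurable, ?_⟩
      apply HasFiniteIntegral.of_bounded (C := M)
      filter_upwards [hae] with z hz
      have : lam z.1 = c (z.1, s z.1) := hlameq z.1
      rw [Real.norm_eq_abs, this]
      exact hM (z.1, s z.1) ⟨hz.1, (hsmin z.1).1⟩
    have hmono : ∀ᵐ z ∂μ, lam z.1 ≤ c z := by
      filter_upwards [hae] with z hz
      calc lam z.1 = c2 z.1 (s z.1) := hlameq z.1
        _ ≤ c2 z.1 z.2 := (hsmin z.1).2 z.2 hz.2
        _ = c z := rfl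
    calc ∫ x in B, lam x = ∫ x, lam x ∂(Measure.map Prod.fst μ) := by rw [hmap]
      _ = ∫ z, lam z.1 ∂μ :=
          integral_map measurable_fst.aemeasurable lammeas.aestronglyMeasurable
      _ ≤ ∫ z, c z ∂μ := integral_mono_ae hintlam hintc hmono
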